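/- arXiv:0705.3453 — 2 statements merged into one kernel-verified Lean document; each statement's English description precedes it below -/
import Mathlib

section
/- For a connected oriented ribbon graph encoded by permutations (σ₀, σ₁, σ₂) on {1,…,2n} with σ₁ a fixed-point-free involution with n orbits and σ₂ = σ₁σ₀⁻¹, the Euler characteristic V - E + F = (number of orbits of σ₀) - n + (number of orbits of σ₂) is even, so the genus g = (2 - V + E - F)/2 is a nonnegative integer. -/
open Equiv

noncomputable def orbitCount {α : Type*} (σ : Equiv.Perm α) : ℕ :=
  Nat.card (MulAction.orbitRel.Quotient (Subgroup.zpowers σ) α)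

namespace RibbonAux

open Equiv.Perm Subgroup

section Counting

variable {α : Type*}

lemma card_lt_of_surj_not_inj {β γ : Type*} [Finite β] (f : β → γ)
    (hf : Function.Surjective f) {a b : β} (hab : a ≠ b) (h : f a = f b) :
    Nat.card γ < Nat.card β := by
  have h1 : Nat.card γ ≤ Nat.card β := Nat.card_le_card_of_surjective f hf
  rcases lt_or_eq_of_le h1 with h2 | h2
  · exact h2
  · exfalso
    haveI : Nonempty β := ⟨a⟩
    haveI : Finite γ := Finite.of_surjective f hf
    set g := Function.surjInv hf with hgdef
    have hg : Function.Injective g := Function.injective_surjInv hf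
    have hbij : Function.Bijective g := by
      rw [Nat.bijective_iff_injective_and_card]
      exact ⟨hg, h2⟩
    have hfg : ∀ c, f (g c) = c := fun c => Function.surjInv_eq hf c
    have hgf : ∀ x, g (f x) = x := by
      intro x
      obtain ⟨c, hc⟩ := hbij.2 x
      rw [← hc, hfg]
    exact hab (by rw [← hgf a, ← hgf b, h])

variable [Finite α]

lemma card_quot_le {r s : Setoid α} (h : ∀ x y, r x y → s x y) :
    Nat.card (Quotient s) ≤ Nat.card (Quotient r) := by
  apply Nat.card_le_card_of_surjective (Quotient.map' id (fun x y hxy => h x y hxy))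
  intro q
  exact Quotient.inductionOn' q fun a => ⟨Quotient.mk'' a, rfl⟩

lemma card_quot_lt {r s : Setoid α} (h : ∀ x y, r x y → s x y)
    {a b : α} (hs : s a b) (hr : ¬ r a b) :
    Nat.card (Quotient s) < Nat.card (Quotient r) := by
  apply card_lt_of_surj_not_inj (Quotient.map' id (fun x y hxy => h x y hxy))
    (fun q => Quotient.inductionOn' q fun a => ⟨Quotient.mk'' a, rfl⟩)
    (a := Quotient.mk'' a) (b := Quotient.mk'' b)
  · intro he
    exact hr (Quotient.eq''.mp he)
  · exact Quotient.sound' hs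

open Classical in
lemma card_quot_offset {r s : Setoid α} {a b : α} (hle : ∀ x y, r x y → s x y)
    (h : ∀ x y, s x y → r x y ∨ ((r x a ∨ r x b) ∧ (r y a ∨ r y b))) :
    Nat.card (Quotient r) ≤ Nat.card (Quotient s) + 1 := by
  have key : ∀ x y, s x y → ¬ r x a → ¬ r x b → r x y := by
    intro x y hxy hxa hxb
    rcases h x y hxy with h' | ⟨h' | h', _⟩
    · exact h'
    · exact absurd h' hxa
    · exact absurd h' hxb
  have wd : ∀ x y, r x y →
      (if r x a then Sum.inl (Quotient.mk'' a : Quotient s)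
        else if r x b then Sum.inr () else Sum.inl (Quotient.mk'' x)) =
      (if r y a then Sum.inl (Quotient.mk'' a : Quotient s)
        else if r y b then Sum.inr () else Sum.inl (Quotient.mk'' y)) := by
    intro x y hxy
    have ha' : r x a ↔ r y a := ⟨fun h' => r.trans' (r.symm' hxy) h', fun h' => r.trans' hxy h'⟩
    have hb' : r x b ↔ r y b := ⟨fun h' => r.trans' (r.symm' hxy) h', fun h' => r.trans' hxy h'⟩
    by_cases h1 : r x a
    · rw [if_pos h1, if_pos (ha'.mp h1)]
    · rw [if_neg h1, if_neg (fun h' => h1 (ha'.mpr h'))]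
      by_cases h2 : r x b
      · rw [if_pos h2, if_pos (hb'.mp h2)]
      · rw [if_neg h2, if_neg (fun h' => h2 (hb'.mpr h')), Quotient.sound' (hle x y hxy)]
  set f : Quotient r → Quotient s ⊕ Unit := fun q =>
    Quotient.liftOn' q (fun x => if r x a then Sum.inl (Quotient.mk'' a : Quotient s)
      else if r x b then Sum.inr () else Sum.inl (Quotient.mk'' x)) wd with hfdef
  have hinj : Function.Injective f := by
    intro q1 q2
    refine Quotient.inductionOn₂' q1 q2 fun x y hxy => ?_
    simp only [hfdef, Quotient.liftOn'_mk''] at hxy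
    apply Quotient.sound'
    by_cases h1 : r x a
    · by_cases h2 : r y a
      · exact r.trans' h1 (r.symm' h2)
      · rw [if_pos h1, if_neg h2] at hxy
        by_cases h3 : r y b
        · rw [if_pos h3] at hxy; exact absurd hxy (by simp)
        · rw [if_neg h3] at hxy
          have : s a y := Quotient.eq''.mp (Sum.inl.inj hxy)
          exact absurd (key y a (s.symm' this) h2 h3) h2
    · by_cases h2 : r y a
      · rw [if_neg h1, if_pos h2] at hxy
        by_cases h3 : r x b
        · rw [if_pos h3] at hxy; exact absurd hxy (by simp)
        · rw [if_neg h3] at hxy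
          have : s x a := Quotient.eq''.mp (Sum.inl.inj hxy)
          exact absurd (key x a this h1 h3) h1
      · rw [if_neg h1, if_neg h2] at hxy
        by_cases h3 : r x b
        · by_cases h4 : r y b
          · exact r.trans' h3 (r.symm' h4)
          · rw [if_pos h3, if_neg h4] at hxy; exact absurd hxy.symm (by simp)
        · by_cases h4 : r y b
          · rw [if_neg h3, if_pos h4] at hxy; exact absurd hxy (by simp)
          · rw [if_neg h3, if_neg h4] at hxy
            exact key x y (Quotient.eq''.mp (Sum.inl.inj hxy)) h1 h3
  calc Nat.card (Quotient r) ≤ Nat.card (Quotient s ⊕ Unit) :=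
        Nat.card_le_card_of_injective f hinj
    _ = Nat.card (Quotient s) + 1 := by
        rw [Nat.card_sum]; simp

end Counting

section PermLemmas

variable {α : Type*} [Fintype α] [DecidableEq α]

lemma orbitRel_zpowers_eq (σ : Perm α) :
    MulAction.orbitRel (Subgroup.zpowers σ) α = Perm.SameCycle.setoid σ := by
  apply Setoid.ext
  intro x y
  constructor
  · intro h
    obtain ⟨⟨g, hg⟩, hgy⟩ := MulAction.mem_orbit_iff.mp h
    rw [Subgroup.mem_zpowers_iff] at hg
    obtain ⟨k, rfl⟩ := hg
    exact Perm.SameCycle.symm ⟨k, hgy⟩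
  · intro h
    obtain ⟨k, hk⟩ := Perm.SameCycle.symm (show σ.SameCycle x y from h)
    exact MulAction.mem_orbit_iff.mpr ⟨⟨σ ^ k, Subgroup.mem_zpowers_iff.mpr ⟨k, rfl⟩⟩, hk⟩

lemma orbitCount_eq (σ : Perm α) :
    orbitCount σ = Nat.card (Quotient (Perm.SameCycle.setoid σ)) := by
  show Nat.card (Quotient (MulAction.orbitRel (Subgroup.zpowers σ) α)) = _
  rw [orbitRel_zpowers_eq]

lemma sameCycle_setoid_iff {σ : Perm α} {x y : α} :
    (Perm.SameCycle.setoid σ) x y ↔ σ.SameCycle x y := Iff.rfl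

lemma sameCycle_of_pointwise {τ ρ : Perm α} (h : ∀ x, τ.SameCycle x (ρ x)) :
    ∀ {x y}, ρ.SameCycle x y → τ.SameCycle x y := by
  intro x y hxy
  obtain ⟨i, hi, rfl⟩ := hxy.exists_pow_eq'
  clear hi hxy
  induction i with
  | zero => simpa using Perm.SameCycle.refl τ x
  | succ m ih =>
    have step : τ.SameCycle ((ρ ^ m) x) ((ρ ^ (m + 1)) x) := by
      have : (ρ ^ (m + 1)) x = ρ ((ρ ^ m) x) := by
        rw [pow_succ', Perm.mul_apply]
      rw [this]
      exact h ((ρ ^ m) x)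
    exact ih.trans step

lemma sameCycle_swap_mul {σ : Perm α} {a b : α} (h : ¬ σ.SameCycle a b) :
    (swap a b * σ).SameCycle a b := by
  have hab : a ≠ b := fun he => h (he ▸ Perm.SameCycle.refl σ a)
  have hex : ∃ j, 0 < j ∧ (σ ^ j) a = a :=
    ⟨orderOf σ, orderOf_pos σ, by rw [pow_orderOf_eq_one]; rfl⟩
  classical
  set j := Nat.find hex with hjdef
  obtain ⟨hj0, hja⟩ := Nat.find_spec hex
  have key : ∀ i, i < j → ((swap a b * σ) ^ i) a = (σ ^ i) a ∧ (σ ^ i) a ≠ a ∨ i = 0 := by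
    intro i hi
    induction i with
    | zero => exact Or.inr rfl
    | succ m ih =>
      left
      have hmj : m < j := lt_trans (Nat.lt_succ_self m) hi
      have hm1 : ((swap a b * σ) ^ m) a = (σ ^ m) a := by
        rcases ih hmj with ⟨h1, _⟩ | h0
        · exact h1
        · subst h0; simp
      have hne_a : (σ ^ (m + 1)) a ≠ a := by
        intro he
        exact Nat.find_min hex hi ⟨Nat.succ_pos m, he⟩
      have hne_b : (σ ^ (m + 1)) a ≠ b := by
        intro he
        exact h ⟨((m : ℕ) + 1 : ℕ), by rw [zpow_natCast]; exact he⟩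
      constructor
      · rw [pow_succ', Perm.mul_apply, hm1, Perm.mul_apply,
          pow_succ' σ m, Perm.mul_apply]
        exact swap_apply_of_ne_of_ne (by rw [← Perm.mul_apply, ← pow_succ']; exact hne_a)
          (by rw [← Perm.mul_apply, ← pow_succ']; exact hne_b)
      · exact hne_a
  have hj1 : j - 1 < j := Nat.sub_lt hj0 one_pos
  have hm1 : ((swap a b * σ) ^ (j - 1)) a = (σ ^ (j - 1)) a := by
    rcases key (j - 1) hj1 with ⟨h1, _⟩ | h0
    · exact h1
    · rw [h0]; simp
  have hfin : ((swap a b * σ) ^ j) a = b := by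
    have hj : j = (j - 1) + 1 := (Nat.succ_pred_eq_of_pos hj0).symm
    rw [hj, pow_succ', Perm.mul_apply, hm1, Perm.mul_apply]
    have : σ ((σ ^ (j - 1)) a) = a := by
      rw [← Perm.mul_apply, ← pow_succ', ← hj]; exact hja
    rw [this, swap_apply_left]
  exact ⟨(j : ℤ), by rw [zpow_natCast]; exact hfin⟩

lemma orbitCount_swap_mul_lt {σ : Perm α} {a b : α} (h : ¬ σ.SameCycle a b) :
    orbitCount (swap a b * σ) < orbitCount σ := by
  have hs1 := sameCycle_swap_mul h
  have hpt : ∀ x, (swap a b * σ).SameCycle x (σ x) := by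
    intro x
    rcases eq_or_ne (σ x) a with h1 | h1
    · have hx : (swap a b * σ) x = b := by rw [Perm.mul_apply, h1, swap_apply_left]
      have hxb : (swap a b * σ).SameCycle x b := ⟨1, by rw [zpow_one]; exact hx⟩
      rw [h1]
      exact hxb.trans hs1.symm
    · rcases eq_or_ne (σ x) b with h2 | h2
      · have hx : (swap a b * σ) x = a := by rw [Perm.mul_apply, h2, swap_apply_right]
        have hxa : (swap a b * σ).SameCycle x a := ⟨1, by rw [zpow_one]; exact hx⟩
        rw [h2]
        exact hxa.trans hs1
      · exact ⟨1, by rw [zpow_one, Perm.mul_apply, swap_apply_of_ne_of_ne h1 h2]⟩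
  rw [orbitCount_eq, orbitCount_eq]
  exact card_quot_lt (r := Perm.SameCycle.setoid σ) (s := Perm.SameCycle.setoid (swap a b * σ))
    (fun x y hxy => sameCycle_of_pointwise hpt hxy) hs1 h

lemma outside_claim {σ : Perm α} (a b : α) :
    ∀ x y, σ.SameCycle x y → ¬ (swap a b * σ).SameCycle x a → ¬ (swap a b * σ).SameCycle x b →
      (swap a b * σ).SameCycle x y := by
  intro x y hxy hxa hxb
  obtain ⟨i, hi, rfl⟩ := hxy.exists_pow_eq'
  clear hi hxy
  induction i with
  | zero => simpa using Perm.SameCycle.refl _ x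
  | succ m ih =>
    have hrz : (swap a b * σ).SameCycle x ((σ ^ m) x) := ih
    set z := (σ ^ m) x with hzdef
    rcases eq_or_ne (σ z) a with h1 | h1
    · exfalso
      have : (swap a b * σ) z = b := by rw [Perm.mul_apply, h1, swap_apply_left]
      exact hxb (hrz.trans ⟨1, by rw [zpow_one]; exact this⟩)
    · rcases eq_or_ne (σ z) b with h2 | h2
      · exfalso
        have : (swap a b * σ) z = a := by rw [Perm.mul_apply, h2, swap_apply_right]
        exact hxa (hrz.trans ⟨1, by rw [zpow_one]; exact this⟩)
      · have hstep : (swap a b * σ).SameCycle z (σ z) :=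
          ⟨1, by rw [zpow_one, Perm.mul_apply, swap_apply_of_ne_of_ne h1 h2]⟩
        have : (σ ^ (m + 1)) x = σ z := by rw [pow_succ', Perm.mul_apply, hzdef]
        rw [this]
        exact hrz.trans hstep

lemma orbitCount_swap_mul_le {σ : Perm α} {a b : α} (hab : a ≠ b) :
    orbitCount (swap a b * σ) ≤ orbitCount σ + 1 := by
  by_cases hs : (swap a b * σ).SameCycle a b
  · -- split-type case : orbits of swap*σ refine orbits of σ
    have hστ : ∀ x, σ x = swap a b ((swap a b * σ) x) := by
      intro x
      rw [Perm.mul_apply, swap_apply_self]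
    have hpt : ∀ x, (swap a b * σ).SameCycle x (σ x) := by
      intro x
      rcases eq_or_ne ((swap a b * σ) x) a with h1 | h1
      · have : σ x = b := by rw [hστ x, h1, swap_apply_left]
        rw [this]
        exact Equiv.Perm.SameCycle.trans
          (⟨1, by rw [zpow_one]; exact h1⟩ : (swap a b * σ).SameCycle x a) hs
      · rcases eq_or_ne ((swap a b * σ) x) b with h2 | h2
        · have : σ x = a := by rw [hστ x, h2, swap_apply_right]
          rw [this]
          exact Equiv.Perm.SameCycle.trans
            (⟨1, by rw [zpow_one]; exact h2⟩ : (swap a b * σ).SameCycle x b) hs.symm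
        · have : σ x = (swap a b * σ) x := by rw [hστ x, swap_apply_of_ne_of_ne h1 h2]
          rw [this]
          exact ⟨1, by rw [zpow_one]⟩
    have hcmp := card_quot_le (r := Perm.SameCycle.setoid σ)
      (s := Perm.SameCycle.setoid (swap a b * σ))
      (fun x y hxy => sameCycle_of_pointwise hpt hxy)
    rw [orbitCount_eq σ, orbitCount_eq (swap a b * σ)]
    omega
  · -- merge-type case
    have hσab : σ.SameCycle a b := by
      have := sameCycle_swap_mul hs
      rwa [← mul_assoc, swap_mul_self, one_mul] at this
    have hpt : ∀ x, σ.SameCycle x ((swap a b * σ) x) := by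
      intro x
      rcases eq_or_ne (σ x) a with h1 | h1
      · have : (swap a b * σ) x = b := by rw [Perm.mul_apply, h1, swap_apply_left]
        rw [this]
        exact Equiv.Perm.SameCycle.trans ((⟨1, by rw [zpow_one]; exact h1⟩ : σ.SameCycle x a)) hσab
      · rcases eq_or_ne (σ x) b with h2 | h2
        · have : (swap a b * σ) x = a := by rw [Perm.mul_apply, h2, swap_apply_right]
          rw [this]
          exact Equiv.Perm.SameCycle.trans ((⟨1, by rw [zpow_one]; exact h2⟩ : σ.SameCycle x b)) hσab.symm
        · have : (swap a b * σ) x = σ x := by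
            rw [Perm.mul_apply, swap_apply_of_ne_of_ne h1 h2]
          rw [this]
          exact ⟨1, by rw [zpow_one]⟩
    have hle : ∀ x y, (Perm.SameCycle.setoid (swap a b * σ)) x y →
        (Perm.SameCycle.setoid σ) x y :=
      fun x y hxy => sameCycle_of_pointwise hpt hxy
    have hmain : ∀ x y, (Perm.SameCycle.setoid σ) x y →
        (Perm.SameCycle.setoid (swap a b * σ)) x y ∨
        (((Perm.SameCycle.setoid (swap a b * σ)) x a ∨
          (Perm.SameCycle.setoid (swap a b * σ)) x b) ∧
         ((Perm.SameCycle.setoid (swap a b * σ)) y a ∨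
          (Perm.SameCycle.setoid (swap a b * σ)) y b)) := by
      intro x y hxy
      by_cases hxa : (swap a b * σ).SameCycle x a
      · by_cases hy : (swap a b * σ).SameCycle y a ∨ (swap a b * σ).SameCycle y b
        · exact Or.inr ⟨Or.inl hxa, hy⟩
        · push_neg at hy
          exact Or.inl ((outside_claim a b y x hxy.symm hy.1 hy.2).symm)
      · by_cases hxb : (swap a b * σ).SameCycle x b
        · by_cases hy : (swap a b * σ).SameCycle y a ∨ (swap a b * σ).SameCycle y b
          · exact Or.inr ⟨Or.inr hxb, hy⟩
          · push_neg at hy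
            exact Or.inl ((outside_claim a b y x hxy.symm hy.1 hy.2).symm)
        · exact Or.inl (outside_claim a b x y hxy hxa hxb)
    have hcmp := card_quot_offset (r := Perm.SameCycle.setoid (swap a b * σ))
      (s := Perm.SameCycle.setoid σ) hle hmain
    rw [orbitCount_eq σ, orbitCount_eq (swap a b * σ)]
    omega

lemma orbitCount_swap_mul_eq {σ : Perm α} {a : α} (ha : σ a ≠ a) :
    orbitCount (swap a (σ a) * σ) = orbitCount σ + 1 := by
  have hab : a ≠ σ a := Ne.symm ha
  have hτa : (swap a (σ a) * σ) a = a := by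
    rw [Perm.mul_apply, swap_apply_right]
  have upper := orbitCount_swap_mul_le (σ := σ) hab
  have hpt : ∀ x, σ.SameCycle x ((swap a (σ a) * σ) x) := by
    intro x
    rcases eq_or_ne x a with rfl | hx
    · rw [hτa]
    · rcases eq_or_ne (σ x) (σ a) with h2 | h2
      · exact absurd (σ.injective h2) hx
      · rcases eq_or_ne (σ x) a with h1 | h1
        · have : (swap a (σ a) * σ) x = σ a := by rw [Perm.mul_apply, h1, swap_apply_left]
          rw [this]
          exact Equiv.Perm.SameCycle.trans ((⟨1, by rw [zpow_one]; exact h1⟩ : σ.SameCycle x a)) ⟨1, by rw [zpow_one]⟩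
        · have : (swap a (σ a) * σ) x = σ x := by
            rw [Perm.mul_apply, swap_apply_of_ne_of_ne h1 h2]
          rw [this]
          exact ⟨1, by rw [zpow_one]⟩
  have hstrict : ¬ (swap a (σ a) * σ).SameCycle a (σ a) := by
    intro hsc
    exact ha (hsc.eq_of_left hτa).symm
  have hσ1 : σ.SameCycle a (σ a) := ⟨1, by rw [zpow_one]⟩
  have lower := card_quot_lt (r := Perm.SameCycle.setoid (swap a (σ a) * σ))
    (s := Perm.SameCycle.setoid σ)
    (fun x y hxy => sameCycle_of_pointwise hpt hxy) hσ1 hstrict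
  rw [orbitCount_eq σ, orbitCount_eq (swap a (σ a) * σ)] at *
  omega

lemma orbitCount_le_card (σ : Perm α) : orbitCount σ ≤ Fintype.card α := by
  rw [orbitCount_eq]
  have := Nat.card_le_card_of_surjective
    (Quotient.mk'' : α → Quotient (Perm.SameCycle.setoid σ))
    (fun q => Quotient.inductionOn' q fun a => ⟨a, rfl⟩)
  simpa [Nat.card_eq_fintype_card] using this

lemma orbitCount_lt_card {σ : Perm α} (h : σ ≠ 1) : orbitCount σ < Fintype.card α := by
  obtain ⟨a, ha⟩ : ∃ a, σ a ≠ a := by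
    by_contra hc
    push_neg at hc
    exact h (Equiv.ext hc)
  rw [orbitCount_eq]
  have := card_lt_of_surj_not_inj
    (Quotient.mk'' : α → Quotient (Perm.SameCycle.setoid σ))
    (fun q => Quotient.inductionOn' q fun a => ⟨a, rfl⟩)
    (a := a) (b := σ a) (Ne.symm ha)
    (Quotient.sound' ⟨1, by rw [zpow_one]⟩)
  simpa [Nat.card_eq_fintype_card] using this

lemma orbitCount_one : orbitCount (1 : Perm α) = Fintype.card α := by
  rw [orbitCount_eq]
  have hbij : Function.Bijective (Quotient.mk'' : α → Quotient (Perm.SameCycle.setoid 1)) := by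
    constructor
    · intro x y hxy
      have : (1 : Perm α).SameCycle x y := Quotient.eq''.mp hxy
      simpa [Perm.sameCycle_one] using this
    · exact fun q => Quotient.inductionOn' q fun a => ⟨a, rfl⟩
  rw [← Nat.card_eq_fintype_card, Nat.card_eq_of_bijective _ hbij]

lemma sign_eq_orbitCount (σ : Perm α) :
    Perm.sign σ = (-1 : ℤˣ) ^ (Fintype.card α - orbitCount σ) := by
  suffices H : ∀ k (σ : Perm α), Fintype.card α - orbitCount σ = k →
      Perm.sign σ = (-1 : ℤˣ) ^ k from H _ σ rfl
  intro k
  induction k with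
  | zero =>
    intro σ hσ
    have h1 : σ = 1 := by
      by_contra h
      have := orbitCount_lt_card h
      omega
    subst h1
    simp
  | succ k ih =>
    intro σ hσ
    have hne : σ ≠ 1 := by
      rintro rfl
      rw [orbitCount_one] at hσ
      omega
    obtain ⟨a, ha⟩ : ∃ a, σ a ≠ a := by
      by_contra hc
      push_neg at hc
      exact hne (Equiv.ext hc)
    have hE := orbitCount_swap_mul_eq ha
    have hle := orbitCount_le_card (swap a (σ a) * σ)
    have h' : Fintype.card α - orbitCount (swap a (σ a) * σ) = k := by omega
    have hih := ih _ h'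
    have hσdec : σ = swap a (σ a) * (swap a (σ a) * σ) := by
      rw [← mul_assoc, swap_mul_self, one_mul]
    calc Perm.sign σ = Perm.sign (swap a (σ a) * (swap a (σ a) * σ)) := by rw [← hσdec]
      _ = Perm.sign (swap a (σ a)) * Perm.sign (swap a (σ a) * σ) := by rw [map_mul]
      _ = (-1) * (-1 : ℤˣ) ^ k := by rw [Perm.sign_swap (Ne.symm ha), hih]
      _ = (-1 : ℤˣ) ^ (k + 1) := by rw [pow_succ, mul_comm]

lemma involution_swap_factors (k : ℕ) : ∀ (σ : Perm α), σ * σ = 1 → σ.support.card = k →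
    ∃ l : List (α × α), (∀ p ∈ l, p.1 ≠ p.2) ∧
      (l.map fun p => Equiv.swap p.1 p.2).prod = σ ∧ 2 * l.length = σ.support.card := by
  induction k using Nat.strong_induction_on with
  | _ k ih =>
    intro σ hinv hk
    rcases eq_or_ne σ 1 with rfl | hne
    · exact ⟨[], by simp, by simp, by simp⟩
    · obtain ⟨a, ha⟩ : ∃ a, σ a ≠ a := by
        by_contra hc
        push_neg at hc
        exact hne (Equiv.ext hc)
      have hσσ : ∀ x, σ (σ x) = x := by
        intro x
        have := congrArg (fun f => f x) hinv
        simpa [Perm.mul_apply] using this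
      have hcomm : σ * swap a (σ a) = swap a (σ a) * σ := by
        rw [mul_swap_eq_swap_mul, hσσ a, swap_comm]
      set τ := swap a (σ a) * σ with hτdef
      have hτinv : τ * τ = 1 := by
        rw [hτdef]
        calc swap a (σ a) * σ * (swap a (σ a) * σ)
            = swap a (σ a) * (σ * swap a (σ a)) * σ := by group
          _ = swap a (σ a) * (swap a (σ a) * σ) * σ := by rw [hcomm]
          _ = (swap a (σ a) * swap a (σ a)) * (σ * σ) := by group
          _ = 1 := by rw [swap_mul_self, hinv, one_mul]
      have hτa : τ a = a := by rw [hτdef, Perm.mul_apply, swap_apply_right]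
      have hτb : τ (σ a) = σ a := by
        rw [hτdef, Perm.mul_apply, hσσ a, swap_apply_left]
      have hτx : ∀ x, x ≠ a → x ≠ σ a → τ x = σ x := by
        intro x hx1 hx2
        have h1 : σ x ≠ a := fun he => hx2 (by rw [← he, hσσ])
        have h2 : σ x ≠ σ a := fun he => hx1 (σ.injective he)
        rw [hτdef, Perm.mul_apply, swap_apply_of_ne_of_ne h1 h2]
      have hsupp : τ.support = σ.support \ {a, σ a} := by
        ext x
        simp only [Perm.mem_support, Finset.mem_sdiff, Finset.mem_insert, Finset.mem_singleton]
        rcases eq_or_ne x a with rfl | hx1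
        · simp [hτa]
        · rcases eq_or_ne x (σ a) with rfl | hx2
          · simp [hτb]
          · rw [hτx x hx1 hx2]
            tauto
      have hmem : ({a, σ a} : Finset α) ⊆ σ.support := by
        intro x hx
        simp only [Finset.mem_insert, Finset.mem_singleton] at hx
        rcases hx with rfl | rfl
        · simpa [Perm.mem_support] using ha
        · simp only [Perm.mem_support]
          intro he
          exact ha (by rw [← hσσ a, he, he])
      have hcard2 : ({a, σ a} : Finset α).card = 2 := by
        rw [Finset.card_insert_of_notMem (by simpa using Ne.symm ha), Finset.card_singleton]
      have hτcard : τ.support.card = k - 2 := by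
        rw [hsupp, Finset.card_sdiff_of_subset hmem, hcard2, hk]
      have hk2 : 2 ≤ k := by
        rw [← hk, ← hcard2]
        exact Finset.card_le_card hmem
      obtain ⟨l', hl'ne, hl'prod, hl'len⟩ := ih (k - 2) (by omega) τ hτinv hτcard
      refine ⟨(a, σ a) :: l', ?_, ?_, ?_⟩
      · intro p hp
        rcases List.mem_cons.mp hp with rfl | hp'
        · exact Ne.symm ha
        · exact hl'ne p hp'
      · rw [List.map_cons, List.prod_cons, hl'prod, hτdef, ← mul_assoc, swap_mul_self, one_mul]
      · rw [List.length_cons, hk]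
        rw [hτcard] at hl'len
        omega

end PermLemmas

section GroupLemmas

variable {α : Type*} [Fintype α] [DecidableEq α]

noncomputable def gOrbitCount (H : Subgroup (Perm α)) : ℕ :=
  Nat.card (MulAction.orbitRel.Quotient H α)

lemma gOrbitCount_zpowers (σ : Perm α) : gOrbitCount (Subgroup.zpowers σ) = orbitCount σ := rfl

lemma orbitRel_subgroup_apply {H : Subgroup (Perm α)} {x y : α} :
    (MulAction.orbitRel H α) x y ↔ ∃ g ∈ H, g y = x := by
  show x ∈ MulAction.orbit H y ↔ _
  rw [MulAction.mem_orbit_iff]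
  constructor
  · rintro ⟨⟨g, hg⟩, h⟩
    exact ⟨g, hg, h⟩
  · rintro ⟨g, hg, h⟩
    exact ⟨⟨g, hg⟩, h⟩

lemma gOrbitCount_eq (H : Subgroup (Perm α)) :
    gOrbitCount H = Nat.card (Quotient (MulAction.orbitRel H α)) := rfl

lemma gOrbitCount_le_of_le {H K : Subgroup (Perm α)} (h : H ≤ K) :
    gOrbitCount K ≤ gOrbitCount H := by
  rw [gOrbitCount_eq, gOrbitCount_eq]
  apply card_quot_le
  intro x y hxy
  rw [orbitRel_subgroup_apply] at hxy ⊢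
  obtain ⟨g, hg, hgy⟩ := hxy
  exact ⟨g, h hg, hgy⟩

lemma rel_of_mem_sup {R : α → α → Prop} (hR : Equivalence R) {H : Subgroup (Perm α)} {t : Perm α}
    (hH : ∀ g ∈ H, ∀ x, R x (g x)) (ht : ∀ x, R x (t x)) :
    ∀ g ∈ H ⊔ Subgroup.closure {t}, ∀ x, R x (g x) := by
  have hrw : H ⊔ Subgroup.closure {t} = Subgroup.closure ((H : Set (Perm α)) ∪ {t}) := by
    rw [Subgroup.closure_union, Subgroup.closure_eq]
  intro g hg
  rw [hrw] at hg
  induction hg using Subgroup.closure_induction with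
  | mem f hf =>
    rcases hf with hf | hf
    · exact hH f hf
    · rw [Set.mem_singleton_iff] at hf
      subst hf
      exact ht
  | one => intro x; exact hR.refl x
  | mul f g' hf hg' pf pg' =>
    intro x
    have : (f * g') x = f (g' x) := rfl
    rw [this]
    exact hR.trans (pg' x) (pf (g' x))
  | inv f hf pf =>
    intro x
    have := pf (f⁻¹ x)
    rw [show f (f⁻¹ x) = x from f.apply_symm_apply x] at this
    exact hR.symm this

lemma gOrbitCount_sup_swap_of_rel {H : Subgroup (Perm α)} {a b : α}
    (hrel : (MulAction.orbitRel H α) a b) :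
    gOrbitCount (H ⊔ Subgroup.closure {swap a b}) = gOrbitCount H := by
  set e := (MulAction.orbitRel H α) with hedef
  apply le_antisymm
  · exact gOrbitCount_le_of_le le_sup_left
  · rw [gOrbitCount_eq, gOrbitCount_eq]
    apply card_quot_le
    intro x y hxy
    have hkey : ∀ g ∈ H ⊔ Subgroup.closure {swap a b}, ∀ z, e z (g z) := by
      apply rel_of_mem_sup (R := fun u v => e u v) e.iseqv
      · intro g hg z
        exact orbitRel_subgroup_apply.mpr ⟨g⁻¹, inv_mem hg, by simp⟩
      · intro z
        rcases eq_or_ne z a with rfl | h1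
        · rw [swap_apply_left]
          exact hrel
        · rcases eq_or_ne z b with rfl | h2
          · rw [swap_apply_right]
            exact e.symm' hrel
          · rw [swap_apply_of_ne_of_ne h1 h2]
    obtain ⟨g, hg, hgy⟩ := orbitRel_subgroup_apply.mp hxy
    have hthis := hkey g hg y
    rw [hgy] at hthis
    exact e.symm' hthis

lemma gOrbitCount_le_sup_swap_add_one (H : Subgroup (Perm α)) (a b : α) :
    gOrbitCount H ≤ gOrbitCount (H ⊔ Subgroup.closure {swap a b}) + 1 := by
  set e := (MulAction.orbitRel H α) with hedef
  rw [gOrbitCount_eq, gOrbitCount_eq]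
  apply card_quot_offset (a := a) (b := b)
  · intro x y hxy
    obtain ⟨g, hg, hgy⟩ := orbitRel_subgroup_apply.mp hxy
    exact orbitRel_subgroup_apply.mpr ⟨g, (le_sup_left : H ≤ H ⊔ Subgroup.closure {swap a b}) hg, hgy⟩
  · intro x y hxy
    set R : α → α → Prop := fun u v =>
      e u v ∨ ((e u a ∨ e u b) ∧ (e v a ∨ e v b)) with hRdef
    have hRequiv : Equivalence R := by
      constructor
      · intro u; exact Or.inl (e.refl' u)
      · intro u v huv
        rcases huv with h | ⟨h1, h2⟩
        · exact Or.inl (e.symm' h)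
        · exact Or.inr ⟨h2, h1⟩
      · intro u v w huv hvw
        rcases huv with h | ⟨h1, h2⟩
        · rcases hvw with h' | ⟨h1', h2'⟩
          · exact Or.inl (e.trans' h h')
          · refine Or.inr ⟨?_, h2'⟩
            rcases h1' with h'' | h''
            · exact Or.inl (e.trans' h h'')
            · exact Or.inr (e.trans' h h'')
        · rcases hvw with h' | ⟨h1', h2'⟩
          · refine Or.inr ⟨h1, ?_⟩
            rcases h2 with h'' | h''
            · exact Or.inl (e.trans' (e.symm' h') h'')
            · exact Or.inr (e.trans' (e.symm' h') h'')
          · exact Or.inr ⟨h1, h2'⟩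
    have hkey : ∀ g ∈ H ⊔ Subgroup.closure {swap a b}, ∀ z, R z (g z) := by
      apply rel_of_mem_sup hRequiv
      · intro g hg z
        exact Or.inl (orbitRel_subgroup_apply.mpr ⟨g⁻¹, inv_mem hg, by simp⟩)
      · intro z
        rcases eq_or_ne z a with rfl | h1
        · rw [swap_apply_left]
          exact Or.inr ⟨Or.inl (e.refl' z), Or.inr (e.refl' b)⟩
        · rcases eq_or_ne z b with rfl | h2
          · rw [swap_apply_right]
            exact Or.inr ⟨Or.inr (e.refl' z), Or.inl (e.refl' a)⟩
          · rw [swap_apply_of_ne_of_ne h1 h2]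
            exact Or.inl (e.refl' z)
    obtain ⟨g, hg, hgy⟩ := orbitRel_subgroup_apply.mp hxy
    have hthis := hkey g hg y
    rw [hgy] at hthis
    rcases hthis with h | ⟨h1, h2⟩
    · exact Or.inl (e.symm' h)
    · exact Or.inr ⟨h2, h1⟩

lemma gOrbitCount_eq_one_of_top {H : Subgroup (Perm α)} [Nonempty α]
    (h : ∀ x y : α, ∃ g ∈ H, g x = y) : gOrbitCount H = 1 := by
  rw [gOrbitCount_eq, Nat.card_eq_one_iff_unique]
  constructor
  · constructor
    intro q1 q2
    refine Quotient.inductionOn₂' q1 q2 fun x y => ?_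
    apply Quotient.sound'
    obtain ⟨g, hg, hgx⟩ := h y x
    exact orbitRel_subgroup_apply.mpr ⟨g, hg, hgx⟩
  · exact ⟨Quotient.mk'' Classical.ofNonempty⟩

lemma step_lemma (σ : Perm α) (H : Subgroup (Perm α)) (hσ : σ ∈ H) {a b : α} (hab : a ≠ b) :
    orbitCount (swap a b * σ) + 2 * gOrbitCount H ≤
      orbitCount σ + 2 * gOrbitCount (H ⊔ Subgroup.closure {swap a b}) + 1 := by
  by_cases hrel : (MulAction.orbitRel H α) a b
  · have hg := gOrbitCount_sup_swap_of_rel hrel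
    have hU := orbitCount_swap_mul_le (σ := σ) hab
    omega
  · have hnc : ¬ σ.SameCycle a b := by
      rintro ⟨k, hk⟩
      exact hrel (orbitRel_subgroup_apply.mpr
        ⟨(σ ^ k)⁻¹, inv_mem (zpow_mem hσ k), by rw [← hk]; exact (σ ^ k).symm_apply_apply a⟩)
    have hM := orbitCount_swap_mul_lt hnc
    have hQ3 := gOrbitCount_le_sup_swap_add_one H a b
    omega

lemma walk : ∀ (l : List (α × α)), (∀ p ∈ l, p.1 ≠ p.2) →
    ∀ (σ : Perm α) (H : Subgroup (Perm α)), σ ∈ H →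
    orbitCount ((l.map fun p => swap p.1 p.2).prod * σ) + 2 * gOrbitCount H ≤
      orbitCount σ +
        2 * gOrbitCount (H ⊔ Subgroup.closure {x | x ∈ l.map fun p => swap p.1 p.2}) +
        l.length := by
  intro l
  induction l with
  | nil =>
    intro _ σ H hσ
    have h1 : ({x | x ∈ ([] : List (α × α)).map fun p => swap p.1 p.2} : Set (Perm α)) = ∅ := by
      simp
    rw [h1]
    simp
  | cons p l' ih =>
    intro hl σ H hσ
    have hih := ih (fun q hq => hl q (List.mem_cons_of_mem p hq)) σ H hσ
    set H' := H ⊔ Subgroup.closure {x | x ∈ l'.map fun p => swap p.1 p.2} with hH'def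
    have hσ' : (l'.map fun p => swap p.1 p.2).prod * σ ∈ H' := by
      apply mul_mem
      · apply (le_sup_right : Subgroup.closure {x | x ∈ l'.map fun p => swap p.1 p.2} ≤ H')
        apply Subgroup.list_prod_mem
        intro x hx
        exact Subgroup.subset_closure hx
      · exact (le_sup_left : H ≤ H') hσ
    have hstep := step_lemma _ H' hσ' (hl p List.mem_cons_self)
    have hsup : H' ⊔ Subgroup.closure {swap p.1 p.2} =
        H ⊔ Subgroup.closure {x | x ∈ (p :: l').map fun p => swap p.1 p.2} := by
      have hset : ({x | x ∈ (p :: l').map fun p => swap p.1 p.2} : Set (Perm α)) =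
          {x | x ∈ l'.map fun p => swap p.1 p.2} ∪ {swap p.1 p.2} := by
        ext g
        simp only [List.map_cons, List.mem_cons, Set.mem_setOf_eq, Set.mem_union,
          Set.mem_singleton_iff]
        tauto
      rw [hH'def, sup_assoc, ← Subgroup.closure_union, ← hset]
    rw [hsup] at hstep
    have hprod : ((p :: l').map fun p => swap p.1 p.2).prod * σ =
        swap p.1 p.2 * ((l'.map fun p => swap p.1 p.2).prod * σ) := by
      rw [List.map_cons, List.prod_cons, mul_assoc]
    rw [hprod]
    rw [List.length_cons]
    omega

end GroupLemmas

end RibbonAux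

open RibbonAux

/-- For a connected combinatorial map `(σ₀, σ₁, σ₂)` on `{1,…,2n}` with `σ₁` a
fixed-point-free involution with `n` orbits and `σ₂ = σ₁ σ₀⁻¹`, the Euler characteristic
`V - E + F` equals `2 - 2g` for a nonnegative integer `g` (the genus). -/
theorem ribbon_graph_genus (n : ℕ) (σ₀ σ₁ σ₂ : Equiv.Perm (Fin (2 * n)))
    (hinv : σ₁ * σ₁ = 1) (hfpf : ∀ i, σ₁ i ≠ i) (horb : orbitCount σ₁ = n)
    (h2 : σ₂ = σ₁ * σ₀⁻¹)
    (hconn : ∀ x y : Fin (2 * n), ∃ p ∈ Subgroup.closure {σ₀, σ₁}, p x = y) :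
    ∃ g : ℕ, (orbitCount σ₀ : ℤ) - n + orbitCount σ₂ = 2 - 2 * g := by
  rcases Nat.eq_zero_or_pos n with rfl | hn
  · refine ⟨1, ?_⟩
    have he : ∀ σ : Equiv.Perm (Fin (2 * 0)), orbitCount σ = 0 := by
      intro σ
      have hempty : IsEmpty (MulAction.orbitRel.Quotient (Subgroup.zpowers σ) (Fin (2 * 0))) := by
        constructor
        intro q
        exact Quotient.inductionOn' q fun x => absurd x.isLt (by omega)
      rw [orbitCount, Nat.card_of_isEmpty]
    rw [he σ₀, he σ₂]
    norm_num
  · haveI : Nonempty (Fin (2 * n)) := ⟨⟨0, by omega⟩⟩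
    obtain ⟨l, hl_ne, hl_prod, hl_len⟩ := involution_swap_factors σ₁.support.card σ₁ hinv rfl
    have hsupp : σ₁.support = Finset.univ := by
      ext x
      simp [Equiv.Perm.mem_support, hfpf x]
    have hlen : l.length = n := by
      rw [hsupp] at hl_len
      simp only [Finset.card_univ, Fintype.card_fin] at hl_len
      omega
    have hwalk := walk l hl_ne σ₀⁻¹ (Subgroup.zpowers σ₀)
      (inv_mem (Subgroup.mem_zpowers σ₀))
    rw [hl_prod, ← h2] at hwalk
    have hV' : orbitCount σ₀⁻¹ = orbitCount σ₀ := by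
      unfold orbitCount
      rw [Subgroup.zpowers_inv]
    have hHend : gOrbitCount (Subgroup.zpowers σ₀ ⊔
        Subgroup.closure {x | x ∈ l.map fun p => Equiv.swap p.1 p.2}) = 1 := by
      apply gOrbitCount_eq_one_of_top
      intro x y
      obtain ⟨p, hp, hpx⟩ := hconn x y
      refine ⟨p, ?_, hpx⟩
      have hle : Subgroup.closure {σ₀, σ₁} ≤ Subgroup.zpowers σ₀ ⊔
          Subgroup.closure {x | x ∈ l.map fun p => Equiv.swap p.1 p.2} := by
        rw [Subgroup.closure_le]
        intro g hg
        rcases Set.mem_insert_iff.mp hg with h | h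
        · rw [h]
          exact Subgroup.mem_sup_left (Subgroup.mem_zpowers σ₀)
        · rw [Set.mem_singleton_iff.mp h]
          apply Subgroup.mem_sup_right
          rw [← hl_prod]
          apply Subgroup.list_prod_mem
          intro x hx
          exact Subgroup.subset_closure hx
      exact hle hp
    have hineq0 : orbitCount σ₂ + 2 * orbitCount σ₀ ≤ orbitCount σ₀ + 2 * 1 + n := by
      calc orbitCount σ₂ + 2 * orbitCount σ₀
          = orbitCount σ₂ + 2 * gOrbitCount (Subgroup.zpowers σ₀) := rfl
        _ ≤ orbitCount σ₀⁻¹ + 2 * gOrbitCount (Subgroup.zpowers σ₀ ⊔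
              Subgroup.closure {x | x ∈ l.map fun p => Equiv.swap p.1 p.2}) + l.length := hwalk
        _ = orbitCount σ₀ + 2 * 1 + n := by rw [hV', hHend, hlen]
    have hsV := sign_eq_orbitCount σ₀
    have hsF := sign_eq_orbitCount σ₂
    have hcard : Fintype.card (Fin (2 * n)) = 2 * n := Fintype.card_fin _
    rw [hcard] at hsV hsF
    have hs1 : Equiv.Perm.sign σ₁ = (-1 : ℤˣ) ^ n := by
      rw [← hl_prod]
      rw [MonoidHom.map_list_prod]
      rw [List.prod_eq_pow_card ((l.map fun p => Equiv.swap p.1 p.2).map Equiv.Perm.sign) (-1)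
        (by
          intro x hx
          obtain ⟨g, hg, rfl⟩ := List.mem_map.mp hx
          obtain ⟨q, hq, rfl⟩ := List.mem_map.mp hg
          exact Equiv.Perm.sign_swap (hl_ne q hq))]
      rw [List.length_map, List.length_map, hlen]
    have hmul : Equiv.Perm.sign σ₂ = Equiv.Perm.sign σ₁ * Equiv.Perm.sign σ₀ := by
      rw [h2, map_mul, Equiv.Perm.sign_inv]
    set V := orbitCount σ₀ with hVdef
    set F := orbitCount σ₂ with hFdef
    have hVle : V ≤ 2 * n := by
      have := orbitCount_le_card σ₀
      rwa [hcard] at this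
    have hFle : F ≤ 2 * n := by
      have := orbitCount_le_card σ₂
      rwa [hcard] at this
    have hpow : ((-1 : ℤˣ)) ^ (2 * n - F) = (-1 : ℤˣ) ^ (n + (2 * n - V)) := by
      rw [pow_add, ← hs1, ← hsV, ← hsF]
      exact hmul
    have heven : Even ((2 * n - F) + (n + (2 * n - V))) := by
      have h1 : ((-1 : ℤˣ)) ^ ((2 * n - F) + (n + (2 * n - V))) = 1 := by
        rw [pow_add, hpow, ← pow_add, ← two_mul, pow_mul]
        norm_num
      rwa [neg_one_pow_eq_one_iff_even (by decide : (-1 : ℤˣ) ≠ 1)] at h1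
    rw [Nat.even_iff] at heven
    have hineq : V + F ≤ n + 2 := by omega
    obtain ⟨g, hg⟩ : ∃ g : ℕ, n + 2 = V + F + 2 * g := ⟨(n + 2 - V - F) / 2, by omega⟩
    refine ⟨g, ?_⟩
    push_cast
    omega
end

section
/- Let 𝔾 be the all-A ribbon graph of a connected link diagram D with genus g(𝔾). Every quasi-tree ℚ of 𝔾 satisfies 0 ≤ g(ℚ) ≤ g(𝔾). Consequently, any chain complex whose generators are quasi-trees bigraded with v(ℚ) = -g(ℚ) has homology supported in at most g(𝔾)+1 values of v; in particular the reduced Khovanov homology of D has homological thickness at most g(𝔾)+1. -/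
open Equiv

abbrev HalfEdge (n : ℕ) := Fin n × Bool

/-- The permutation of half-edges that flips the two half-edges of each edge in `H`. -/
def flipOn (n : ℕ) (H : Finset (Fin n)) : Equiv.Perm (HalfEdge n) :=
  Function.Involutive.toPerm
    (fun p => if p.1 ∈ H then (p.1, !p.2) else p)
    (by intro p; by_cases h : p.1 ∈ H <;> simp [h])

/-- Number of faces of the spanning ribbon subgraph with edge set `H` of the ribbon
graph with vertex permutation `σ₀`. -/
noncomputable def faceCount {n : ℕ} (σ₀ : Equiv.Perm (HalfEdge n)) (H : Finset (Fin n)) : ℕ :=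
  orbitCount (σ₀ * flipOn n H)

/-- The all-A ribbon graph of a connected link diagram is connected: the group generated
by the vertex permutation `σ₀` and the edge involution acts transitively on half-edges. -/
def RibbonConnected {n : ℕ} (σ₀ : Equiv.Perm (HalfEdge n)) : Prop :=
  ∀ x y : HalfEdge n, ∃ p ∈ Subgroup.closure {σ₀, flipOn n Finset.univ}, p x = y


section Aux
open MulAction
set_option linter.unusedSectionVars false
variable {α : Type*} [Finite α]

lemma mk_eq_mk_iff_sameCycle (σ : Perm α) (x y : α) :
    (Quotient.mk'' x : orbitRel.Quotient (Subgroup.zpowers σ) α) = Quotient.mk'' y ↔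
      σ.SameCycle y x := by
  rw [Quotient.eq'']
  constructor
  · rintro ⟨⟨p, hp⟩, h⟩
    obtain ⟨k, rfl⟩ := Subgroup.mem_zpowers_iff.mp hp
    exact ⟨k, h⟩
  · rintro ⟨k, hk⟩
    exact ⟨⟨σ ^ k, Subgroup.zpow_mem_zpowers σ k⟩, hk⟩


noncomputable def qmap {G H : Subgroup (Perm α)} (h : G ≤ H) :
    orbitRel.Quotient G α → orbitRel.Quotient H α :=
  Quotient.map' id (by
    rintro x y ⟨⟨g, hg⟩, hgy⟩
    exact ⟨⟨g, h hg⟩, hgy⟩)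

lemma qmap_mk {G H : Subgroup (Perm α)} (h : G ≤ H) (x : α) :
    qmap h (Quotient.mk'' x) = Quotient.mk'' x := rfl

lemma qmap_surjective {G H : Subgroup (Perm α)} (h : G ≤ H) :
    Function.Surjective (qmap h) := by
  intro q
  obtain ⟨x, rfl⟩ := Quotient.exists_rep q
  exact ⟨Quotient.mk'' x, rfl⟩

lemma closure_preserves {S : Set (Perm α)} {E : α → α → Prop}
    (hrefl : ∀ u, E u u) (hsymm : ∀ {u v}, E u v → E v u)
    (htrans : ∀ {u v w}, E u v → E v w → E u w)
    (hgen : ∀ p ∈ S, ∀ u, E u (p u)) :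
    ∀ p ∈ Subgroup.closure S, ∀ u, E u (p u) := by
  intro p hp
  induction hp using Subgroup.closure_induction with
  | mem x hx => exact hgen x hx
  | one => intro u; simpa using hrefl u
  | mul x y hx hy ihx ihy => intro u; exact htrans (ihy u) (by simpa using ihx (y u))
  | inv x hx ih => intro u; exact hsymm (by simpa using ih (x⁻¹ u))

variable [DecidableEq α]

section Count
variable (π : Perm α) (a b : α)

/-- The "merge `a`'s and `b`'s cycles" relation. -/
def Erel (u v : α) : Prop :=
  π.SameCycle u v ∨ ((π.SameCycle u a ∨ π.SameCycle u b) ∧ (π.SameCycle v a ∨ π.SameCycle v b))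

lemma Erel_refl (u : α) : Erel π a b u u := Or.inl (Perm.SameCycle.refl π u)

lemma Erel_symm {u v : α} (h : Erel π a b u v) : Erel π a b v u := by
  rcases h with h | ⟨h1, h2⟩
  · exact Or.inl h.symm
  · exact Or.inr ⟨h2, h1⟩

lemma Erel_trans {u v w : α} (h : Erel π a b u v) (h' : Erel π a b v w) : Erel π a b u w := by
  rcases h with h | ⟨h1, h2⟩
  · rcases h' with h' | ⟨h1', h2'⟩
    · exact Or.inl (h.trans h')
    · refine Or.inr ⟨?_, h2'⟩
      rcases h1' with hh | hh
      · exact Or.inl (h.trans hh)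
      · exact Or.inr (h.trans hh)
  · rcases h' with h' | ⟨h1', h2'⟩
    · refine Or.inr ⟨h1, ?_⟩
      rcases h2 with hh | hh
      · exact Or.inl (h'.symm.trans hh)
      · exact Or.inr (h'.symm.trans hh)
    · exact Or.inr ⟨h1, h2'⟩

lemma Erel_gen (hab : a ≠ b) : ∀ p ∈ ({π, swap a b} : Set (Perm α)), ∀ u, Erel π a b u (p u) := by
  rintro p (rfl | rfl) u
  · exact Or.inl ⟨1, by simp⟩
  · by_cases hua : u = a
    · subst hua
      rw [swap_apply_left]
      exact Or.inr ⟨Or.inl (Perm.SameCycle.refl π u), Or.inr (Perm.SameCycle.refl π b)⟩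
    · by_cases hub : u = b
      · subst hub
        rw [swap_apply_right]
        exact Or.inr ⟨Or.inr (Perm.SameCycle.refl π u), Or.inl (Perm.SameCycle.refl π a)⟩
      · rw [swap_apply_of_ne_of_ne hua hub]
        exact Erel_refl π a b u

lemma Erel_of_closure_eq (hab : a ≠ b) {x y : α}
    (h : (Quotient.mk'' x : orbitRel.Quotient (Subgroup.closure {π, swap a b}) α)
          = Quotient.mk'' y) : Erel π a b y x := by
  rw [Quotient.eq''] at h
  obtain ⟨⟨p, hp⟩, hpx⟩ := h
  have := closure_preserves (Erel_refl π a b) (Erel_symm π a b) (Erel_trans π a b)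
    (Erel_gen π a b hab) p hp y
  rw [show p y = x from hpx] at this
  exact this

lemma zpowers_le_closure : Subgroup.zpowers π ≤ Subgroup.closure {π, swap a b} := by
  rw [Subgroup.zpowers_le]
  exact Subgroup.subset_closure (Set.mem_insert _ _)

lemma count_sameCycle (hab : a ≠ b) (h : π.SameCycle a b) :
    orbitCount π = Nat.card (orbitRel.Quotient (Subgroup.closure {π, swap a b}) α) := by
  apply Nat.card_eq_of_bijective (qmap (zpowers_le_closure π a b))
  constructor
  · intro X Y
    induction X using Quotient.inductionOn' with | h x => ?_
    induction Y using Quotient.inductionOn' with | h y => ?_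
    rw [qmap_mk, qmap_mk]
    intro hf
    have hE := Erel_of_closure_eq π a b hab hf
    rw [mk_eq_mk_iff_sameCycle]
    rcases hE with hE | ⟨h1, h2⟩
    · exact hE
    · have hy : π.SameCycle y a := by
        rcases h1 with hh | hh
        · exact hh
        · exact hh.trans h.symm
      have hx : π.SameCycle a x := by
        rcases h2 with hh | hh
        · exact hh.symm
        · exact h.trans hh.symm
      exact hy.trans hx
  · exact qmap_surjective _

lemma count_not_sameCycle (hab : a ≠ b) (h : ¬ π.SameCycle a b) :
    orbitCount π
      = Nat.card (orbitRel.Quotient (Subgroup.closure {π, swap a b}) α) + 1 := by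
  classical
  set G := Subgroup.closure ({π, swap a b} : Set (Perm α)) with hG
  have htG : swap a b ∈ G := Subgroup.subset_closure (Set.mem_insert_of_mem _ rfl)
  have hABG : (Quotient.mk'' a : orbitRel.Quotient G α) = Quotient.mk'' b := by
    rw [Quotient.eq'']
    exact ⟨⟨swap a b, htG⟩, swap_apply_right a b⟩
  have hABπ : (Quotient.mk'' a : orbitRel.Quotient (Subgroup.zpowers π) α)
      ≠ Quotient.mk'' b := by
    intro hc
    rw [mk_eq_mk_iff_sameCycle] at hc
    exact h hc.symm
  let f := qmap (zpowers_le_closure π a b)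
  let gm : orbitRel.Quotient (Subgroup.zpowers π) α → orbitRel.Quotient G α ⊕ Unit :=
    fun X => if X = Quotient.mk'' b then Sum.inr Unit.unit else Sum.inl (f X)
  have hbij : Function.Bijective gm := by
    constructor
    · intro X Y hXY
      induction X using Quotient.inductionOn' with | h x => ?_
      induction Y using Quotient.inductionOn' with | h y => ?_
      by_cases h1 : (Quotient.mk'' x : orbitRel.Quotient (Subgroup.zpowers π) α) = Quotient.mk'' b
        <;> by_cases h2 : (Quotient.mk'' y : orbitRel.Quotient (Subgroup.zpowers π) α) = Quotient.mk'' b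
      · exact h1.trans h2.symm
      · simp only [gm, if_pos h1, if_neg h2] at hXY
        cases hXY
      · simp only [gm, if_neg h1, if_pos h2] at hXY
        cases hXY
      · simp only [gm, if_neg h1, if_neg h2, Sum.inl.injEq] at hXY
        have hE := Erel_of_closure_eq π a b hab (by simpa [f, qmap_mk] using hXY)
        rw [mk_eq_mk_iff_sameCycle]
        rcases hE with hE | ⟨h1', h2'⟩
        · exact hE
        · have hy : π.SameCycle y a := by
            rcases h1' with hh | hh
            · exact hh
            · exact absurd ((mk_eq_mk_iff_sameCycle π y b).mpr hh.symm) h2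
          have hx : π.SameCycle a x := by
            rcases h2' with hh | hh
            · exact hh.symm
            · exact absurd ((mk_eq_mk_iff_sameCycle π x b).mpr hh.symm) h1
          exact hy.trans hx
    · rintro (c | ⟨⟩)
      · obtain ⟨X, hX⟩ := qmap_surjective (zpowers_le_closure π a b) c
        by_cases hXb : X = Quotient.mk'' b
        · refine ⟨Quotient.mk'' a, ?_⟩
          have hc : c = (Quotient.mk'' a : orbitRel.Quotient G α) := by
            rw [← hX, hXb, qmap_mk (zpowers_le_closure π a b) b]
            exact hABG.symm
          simp only [gm, if_neg hABπ, hc, f, qmap_mk]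
          rfl
        · refine ⟨X, ?_⟩
          simp only [gm, if_neg hXb]
          exact congrArg Sum.inl hX
      · exact ⟨Quotient.mk'' b, by simp [gm]⟩
  rw [orbitCount, Nat.card_eq_of_bijective gm hbij, Nat.card_sum]
  simp

end Count

lemma perm_periodic (σ : Perm α) (x : α) : x ∈ Function.periodicPts σ := by
  have : Finite (Perm α) := by infer_instance
  refine ⟨orderOf σ, orderOf_pos σ, ?_⟩
  show (⇑σ)^[orderOf σ] x = x
  rw [Equiv.Perm.iterate_eq_pow, pow_orderOf_eq_one]
  rfl

lemma sameCycle_of_not_sameCycle (σ : Perm α) {a b : α} (hab : a ≠ b)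
    (h : ¬σ.SameCycle a b) : (σ * swap a b).SameCycle a b := by
  set ρ := σ * swap a b with hρ
  set m := Function.minimalPeriod σ a with hm
  have hm0 : 0 < m := Function.minimalPeriod_pos_of_mem_periodicPts (perm_periodic σ a)
  have hma : (σ ^ m) a = a := Function.isPeriodicPt_minimalPeriod σ a
  have claim : ∀ k, 1 ≤ k → k ≤ m → (ρ ^ k) b = (σ ^ k) a := by
    intro k
    induction k with
    | zero => omega
    | succ k ih =>
      intro _ hkm
      rcases Nat.eq_zero_or_pos k with rfl | hk1
      · show (ρ ^ 1) b = (σ ^ 1) a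
        simp only [pow_one, hρ, Perm.mul_apply, swap_apply_right]
      · have hka : (σ ^ k) a ≠ a := fun hc =>
          Function.not_isPeriodicPt_of_pos_of_lt_minimalPeriod (by omega) (by omega) hc
        have hkb : (σ ^ k) a ≠ b := fun hc => h ⟨(k : ℤ), by simpa using hc⟩
        rw [pow_succ', Perm.mul_apply, ih (by omega) (by omega), hρ, Perm.mul_apply,
          swap_apply_of_ne_of_ne hka hkb, ← Perm.mul_apply, ← pow_succ']
  have hfin : (ρ ^ m) b = a := (claim m hm0 le_rfl).trans hma
  have hsc : ρ.SameCycle b a := ⟨(m : ℤ), by simpa using hfin⟩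
  exact hsc.symm

lemma not_sameCycle_of_sameCycle (σ : Perm α) {a b : α} (hab : a ≠ b)
    (h : σ.SameCycle a b) : ¬(σ * swap a b).SameCycle a b := by
  classical
  set ρ := σ * swap a b with hρ
  obtain ⟨i, hi0, _, hia⟩ := (h.symm).exists_pow_eq''
  have hex : ∃ m, 0 < m ∧ (σ ^ m) b = a := ⟨i, hi0, hia⟩
  set m := Nat.find hex with hmdef
  obtain ⟨hm0, hma⟩ : 0 < m ∧ (σ ^ m) b = a := Nat.find_spec hex
  have hmin : ∀ k, 0 < k → k < m → (σ ^ k) b ≠ a := by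
    intro k hk0 hkm hc
    exact Nat.find_min hex hkm ⟨hk0, hc⟩
  set p := Function.minimalPeriod σ b with hp
  have hp0 : 0 < p := Function.minimalPeriod_pos_of_mem_periodicPts (perm_periodic σ b)
  have hpb : (σ ^ p) b = b := Function.isPeriodicPt_minimalPeriod σ b
  have hmp : m < p := by
    by_contra hle
    push_neg at hle
    rcases Nat.lt_or_ge p m with hlt | hge
    · have : (σ ^ (m - p)) b = a := by
        have : (σ ^ (m - p)) ((σ ^ p) b) = a := by
          rw [← Perm.mul_apply, ← pow_add]
          rw [Nat.sub_add_cancel hle]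
          exact hma
        rwa [hpb] at this
      exact hmin (m - p) (by omega) (by omega) this
    · have hpm : p = m := by omega
      rw [hpm, hma] at hpb
      exact hab hpb.symm.symm
  have hkb : ∀ k, 0 < k → k ≤ m → (σ ^ k) b ≠ b := fun k hk0 hkm hc =>
    Function.not_isPeriodicPt_of_pos_of_lt_minimalPeriod (by omega) (by omega) hc
  have claim : ∀ k, 1 ≤ k → k ≤ m → (ρ ^ k) a = (σ ^ k) b := by
    intro k
    induction k with
    | zero => omega
    | succ k ih =>
      intro _ hkm
      rcases Nat.eq_zero_or_pos k with rfl | hk1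
      · show (ρ ^ 1) a = (σ ^ 1) b
        simp only [pow_one, hρ, Perm.mul_apply, swap_apply_left]
      · have h1 : (σ ^ k) b ≠ a := hmin k hk1 (by omega)
        have h2 : (σ ^ k) b ≠ b := hkb k hk1 (by omega)
        rw [pow_succ', Perm.mul_apply, ih (by omega) (by omega), hρ, Perm.mul_apply,
          swap_apply_of_ne_of_ne h1 h2, ← Perm.mul_apply, ← pow_succ']
  have hper : Function.IsPeriodicPt ρ m a := by
    show (ρ ^ m) a = a
    rw [claim m hm0 le_rfl, hma]
  intro hsc
  obtain ⟨j, hj0, _, hja⟩ := hsc.exists_pow_eq''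
  have hmod : (ρ ^ (j % m)) a = b := by
    have := hper.iterate_mod_apply j
    simpa [Equiv.Perm.iterate_eq_pow, hja] using this
  rcases Nat.eq_zero_or_pos (j % m) with hz | hpos
  · rw [hz, pow_zero] at hmod
    exact hab hmod
  · have hlt : j % m < m := Nat.mod_lt _ hm0
    rw [claim _ hpos (by omega)] at hmod
    exact hkb _ hpos (by omega) hmod

lemma closure_pair_eq (σ : Perm α) (a b : α) :
    Subgroup.closure {σ * swap a b, swap a b} = Subgroup.closure {σ, swap a b} := by
  apply le_antisymm
  · rw [Subgroup.closure_le]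
    rintro p (rfl | rfl)
    · exact Subgroup.mul_mem _ (Subgroup.subset_closure (Set.mem_insert _ _))
        (Subgroup.subset_closure (Set.mem_insert_of_mem _ rfl))
    · exact Subgroup.subset_closure (Set.mem_insert_of_mem _ rfl)
  · rw [Subgroup.closure_le]
    rintro p (rfl | rfl)
    · have hm : (p * swap a b) * swap a b ∈
          Subgroup.closure ({p * swap a b, swap a b} : Set (Perm α)) :=
        Subgroup.mul_mem _ (Subgroup.subset_closure (Set.mem_insert _ _))
          (Subgroup.subset_closure (Set.mem_insert_of_mem _ rfl))
      simpa [mul_assoc, swap_mul_self] using hm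
    · exact Subgroup.subset_closure (Set.mem_insert_of_mem _ rfl)

lemma key_swap (σ : Perm α) {a b : α} (hab : a ≠ b) :
    orbitCount (σ * swap a b) + 1 = orbitCount σ ∨
      orbitCount (σ * swap a b) = orbitCount σ + 1 := by
  by_cases h : σ.SameCycle a b
  · right
    have h1 := count_sameCycle σ a b hab h
    have h2 := count_not_sameCycle (σ * swap a b) a b hab
      (not_sameCycle_of_sameCycle σ hab h)
    rw [closure_pair_eq σ a b] at h2
    omega
  · left
    have h1 := count_not_sameCycle σ a b hab h
    have h2 := count_sameCycle (σ * swap a b) a b hab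
      (sameCycle_of_not_sameCycle σ hab h)
    rw [closure_pair_eq σ a b] at h2
    omega

lemma flipOn_apply (n : ℕ) (H : Finset (Fin n)) (p : HalfEdge n) :
    flipOn n H p = if p.1 ∈ H then (p.1, !p.2) else p := rfl

lemma flipOn_empty (n : ℕ) : flipOn n (∅ : Finset (Fin n)) = 1 := by
  ext p
  · simp [flipOn_apply]
  · simp [flipOn_apply]

lemma flipOn_insert (n : ℕ) (H : Finset (Fin n)) (i : Fin n) (hi : i ∉ H) :
    flipOn n (insert i H) = flipOn n H * swap (i, false) (i, true) := by
  apply Equiv.ext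
  rintro ⟨j, s⟩
  rw [Perm.mul_apply]
  by_cases hj : j = i
  · subst hj
    have hsw : swap ((j : Fin n), false) (j, true) (j, s) = (j, !s) := by
      cases s
      · exact swap_apply_left _ _
      · exact swap_apply_right _ _
    rw [hsw, flipOn_apply, flipOn_apply]
    simp [hi]
  · have hsw : swap ((i : Fin n), false) (i, true) (j, s) = (j, s) :=
      swap_apply_of_ne_of_ne (by simp [hj]) (by simp [hj])
    rw [hsw, flipOn_apply, flipOn_apply]
    simp [hj]

lemma flipOn_compl (n : ℕ) (Q : Finset (Fin n)) :
    flipOn n Q * flipOn n Qᶜ = flipOn n Finset.univ := by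
  apply Equiv.ext
  rintro ⟨j, s⟩
  rw [Perm.mul_apply, flipOn_apply, flipOn_apply, flipOn_apply]
  by_cases hj : j ∈ Q
  · simp [hj]
  · simp [hj]

lemma iter_bounds (n : ℕ) (σ : Perm (HalfEdge n)) (H : Finset (Fin n)) :
    (orbitCount (σ * flipOn n H) : ℤ) ≤ orbitCount σ + H.card ∧
    (orbitCount σ : ℤ) ≤ orbitCount (σ * flipOn n H) + H.card ∧
    ((orbitCount (σ * flipOn n H) : ℤ) - orbitCount σ - H.card) % 2 = 0 := by
  classical
  induction H using Finset.induction_on with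
  | empty => simp [flipOn_empty]
  | @insert i H hi ih =>
    have hrw : σ * flipOn n (insert i H) = (σ * flipOn n H) * swap (i, false) (i, true) := by
      rw [flipOn_insert n H i hi, ← mul_assoc]
    have hk := key_swap (σ * flipOn n H) (a := (i, false)) (b := (i, true)) (by simp)
    rw [hrw, Finset.card_insert_of_notMem hi]
    push_cast
    omega

end Aux

/-- Let `𝔾` be the (connected) all-A ribbon graph of a connected link diagram, of genus
`g(𝔾)`.  Every quasi-tree `ℚ` of `𝔾` has genus `g(ℚ)` with `0 ≤ g(ℚ) ≤ g(𝔾)`;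
consequently the `v`-grading `v(ℚ) = -g(ℚ)` of the quasi-tree complex (which computes
reduced Khovanov homology) takes at most `g(𝔾) + 1` values, so the reduced Khovanov
homology of the diagram has thickness at most `g(𝔾) + 1`. -/
theorem quasi_tree_genus_bounded {n : ℕ} (σ₀ : Equiv.Perm (HalfEdge n))
    (hconn : RibbonConnected σ₀) (g : ℕ)
    (hg : 2 * (g : ℤ) = 2 - (orbitCount σ₀ : ℤ) + n - (faceCount σ₀ Finset.univ : ℤ)) :
    (∀ Q : Finset (Fin n), faceCount σ₀ Q = 1 →
      ∃ gQ : ℕ, 2 * (gQ : ℤ) = 1 - (orbitCount σ₀ : ℤ) + Q.card ∧ gQ ≤ g) ∧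
    Nat.card {v : ℤ // ∃ Q : Finset (Fin n), faceCount σ₀ Q = 1 ∧
        2 * v = (orbitCount σ₀ : ℤ) - 1 - Q.card} ≤ g + 1 := by
  classical
  have hF : faceCount σ₀ Finset.univ = orbitCount (σ₀ * flipOn n Finset.univ) := rfl
  have part1 : ∀ Q : Finset (Fin n), faceCount σ₀ Q = 1 →
      ∃ gQ : ℕ, 2 * (gQ : ℤ) = 1 - (orbitCount σ₀ : ℤ) + Q.card ∧ gQ ≤ g := by
    intro Q hQ
    have hQ' : orbitCount (σ₀ * flipOn n Q) = 1 := hQ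
    obtain ⟨ha, hb, hc⟩ := iter_bounds n σ₀ Q
    rw [hQ'] at ha hb hc
    have hsplit : σ₀ * flipOn n Finset.univ = (σ₀ * flipOn n Q) * flipOn n Qᶜ := by
      rw [mul_assoc, flipOn_compl]
    obtain ⟨ha2, hb2, hc2⟩ := iter_bounds n (σ₀ * flipOn n Q) Qᶜ
    rw [← hsplit, hQ'] at ha2 hb2 hc2
    have hcard : (Qᶜ.card : ℤ) = n - Q.card := by
      have h1 := Finset.card_compl Q
      have h2 := Finset.card_le_univ Q
      rw [Fintype.card_fin] at h1 h2
      omega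
    rw [hF] at hg
    refine ⟨(1 - (orbitCount σ₀ : ℤ) + Q.card).toNat / 2, ?_, ?_⟩ <;> push_cast <;> omega
  refine ⟨part1, ?_⟩
  have hmem : ∀ v : {v : ℤ // ∃ Q : Finset (Fin n), faceCount σ₀ Q = 1 ∧
      2 * v = (orbitCount σ₀ : ℤ) - 1 - Q.card}, v.1 ∈ Finset.Icc (-(g : ℤ)) 0 := by
    intro v
    obtain ⟨Q, hQ1, hQ2⟩ := v.2
    obtain ⟨gQ, hgq, hle⟩ := part1 Q hQ1
    rw [Finset.mem_Icc]
    omega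
  have hcard := Nat.card_le_card_of_injective
    (fun v : {v : ℤ // ∃ Q : Finset (Fin n), faceCount σ₀ Q = 1 ∧
        2 * v = (orbitCount σ₀ : ℤ) - 1 - Q.card} =>
      (⟨v.1, hmem v⟩ : (Finset.Icc (-(g : ℤ)) 0)))
    (fun v w hvw => Subtype.ext (by simpa using congrArg Subtype.val hvw))
  refine le_trans hcard ?_
  rw [Nat.card_eq_fintype_card, Fintype.card_coe, Int.card_Icc]
  omega
end
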